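/- arXiv:2103.15045 — 3 statements merged into one kernel-verified Lean document; each statement's English description precedes it below -/
import Mathlib

section
/- For every simple graph G on vertex set [n], the bipartite graph D(G + K_1), where the join G + K_1 is the graph G with one new vertex joined to all vertices of G, is isomorphic to the bipartite graph (D(G))~ obtained by applying the tilde construction to D(G) with respect to its bipartition [n] ⊔ [n̄]. -/
open SimpleGraph Polynomial

namespace PQPaper

instance instFintypeLex {α : Type*} [h : Fintype α] : Fintype (Lex α) := h

/-- The bipartite graph `D(G)` on `V ⊕ V`: edges `{i, ī}` for every vertex `i`,
and `{i, j̄}`, `{ī, j}` for every edge `{i, j}` of `G`. -/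
def DG {V : Type*} (G : SimpleGraph V) : SimpleGraph (V ⊕ V) :=
  SimpleGraph.fromRel fun a b =>
    match a, b with
    | Sum.inl i, Sum.inr j => i = j ∨ G.Adj i j
    | _, _ => False

/-- `f : V → ℕ` is a hypertree of the bipartite graph `H` on `V ⊕ W`
(with hyperedge side `V`): `H` has a spanning tree whose degree at each
left vertex `v` is `f v + 1`. -/
def IsHypertree {V W : Type*} (H : SimpleGraph (V ⊕ W)) (f : V → ℕ) : Prop :=
  ∃ T : SimpleGraph (V ⊕ W), T ≤ H ∧ T.IsTree ∧
    ∀ v : V, (T.neighborSet (Sum.inl v)).ncard = f v + 1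

/-- The set of hypertrees of `H`. -/
def HT {V W : Type*} (H : SimpleGraph (V ⊕ W)) : Set (V → ℕ) :=
  {f | IsHypertree H f}

/-- The set of internally inactive hyperedges of a hypertree `f`. -/
def inactive {V W : Type*} [LT V] (H : SimpleGraph (V ⊕ W)) (f : V → ℕ) : Set V :=
  {j | ∃ j', j' < j ∧ ∃ g : V → ℕ,
    g j' = f j' + 1 ∧ (g j : ℤ) = (f j : ℤ) - 1 ∧
    (∀ i, i ≠ j' → i ≠ j → g i = f i) ∧ IsHypertree H g}

/-- The interior polynomial `I_H(x) = Σ_{f ∈ HT(H)} x^{ῑ(f)}`. -/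
noncomputable def interiorPoly {V W : Type*} [Fintype V] [LinearOrder V]
    (H : SimpleGraph (V ⊕ W)) : Polynomial ℤ :=
  ∑ k ∈ Finset.range (Fintype.card V + 1),
    Polynomial.C ({f | f ∈ HT H ∧ (inactive H f).ncard = k}.ncard : ℤ) * Polynomial.X ^ k

/-- The perfectly matchable sets of a graph: vertex sets of matchings of `H`. -/
def PMSets {V : Type*} (H : SimpleGraph V) : Set (Set V) :=
  {S | ∃ M : H.Subgraph, M.IsMatching ∧ M.verts = S}

/-- The perfectly matchable set polynomial `p(H,x) = Σ_k |PM(H,k)| x^k`. -/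
noncomputable def pmsPoly {V : Type*} [Fintype V] (H : SimpleGraph V) : Polynomial ℤ :=
  ∑ k ∈ Finset.range (Fintype.card V + 1),
    Polynomial.C ({S | S ∈ PMSets H ∧ S.ncard = 2 * k}.ncard : ℤ) * Polynomial.X ^ k

/-- Join of two vertex-disjoint graphs. -/
def sumJoin {V W : Type*} (G : SimpleGraph V) (H : SimpleGraph W) : SimpleGraph (V ⊕ W) where
  Adj a b :=
    match a, b with
    | Sum.inl x, Sum.inl y => G.Adj x y
    | Sum.inr x, Sum.inr y => H.Adj x y
    | Sum.inl _, Sum.inr _ => True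
    | Sum.inr _, Sum.inl _ => True
  symm := by
    constructor
    rintro (x | x) (y | y) h
    · exact G.symm.symm _ _ h
    · exact trivial
    · exact trivial
    · exact H.symm.symm _ _ h
  loopless := by
    constructor
    rintro (x | x) h
    · exact G.loopless.irrefl x h
    · exact H.loopless.irrefl x h

/-- Join of a family of pairwise vertex-disjoint graphs. -/
def sigmaJoin {ι : Type*} {V : ι → Type*} (G : ∀ i, SimpleGraph (V i)) :
    SimpleGraph (Σ i, V i) :=
  SimpleGraph.fromRel fun a b =>
    a.1 ≠ b.1 ∨ ∃ (i : ι) (x y : V i), a = ⟨i, x⟩ ∧ b = ⟨i, y⟩ ∧ (G i).Adj x y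

/-- A copy of a graph on the lexicographic type synonym of its vertex type. -/
def lexify {α : Type*} (G : SimpleGraph α) : SimpleGraph (Lex α) :=
  G.map toLex.toEmbedding

/-- The polynomial
`f_{ℓ,m}(x) = Σ_{k=0}^{ℓ+m−1} Σ_{α=0}^{k} C(ℓ−1,k−α) C(m,α) Σ_{β=α}^{k} C(ℓ+α−1,β) C(m−α,k−β) x^k`. -/
noncomputable def fPoly (l m : ℕ) : Polynomial ℤ :=
  ∑ k ∈ Finset.range (l + m),
    Polynomial.C (∑ a ∈ Finset.range (k + 1),
      ((l - 1).choose (k - a) : ℤ) * (m.choose a : ℤ) *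
        ∑ b ∈ Finset.Icc a k, ((l + a - 1).choose b : ℤ) * ((m - a).choose (k - b) : ℤ)) *
      Polynomial.X ^ k

/-- The cycle graph on `n` vertices. -/
def cycG (n : ℕ) : SimpleGraph (Fin n) :=
  SimpleGraph.fromRel fun a b =>
    (b : ℕ) = (a : ℕ) + 1 ∨ ((a : ℕ) = n - 1 ∧ (b : ℕ) = 0)

/-- `Γ(V')`: the set of neighbours in `D(H)` of the left vertices in `V'`,
viewed as a subset of the right copy `[m̄]`. -/
def Gam {m : ℕ} (H : SimpleGraph (Fin m)) (V' : Set (Fin m)) : Set (Fin m) :=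
  {j | ∃ i ∈ V', (DG H).Adj (Sum.inl i) (Sum.inr j)}

/-- Condition (ii): `Σ_{i ∈ V'} f(i) ≤ |Γ(V')| − 1` for every nonempty `V' ⊆ [m]`. -/
def cond2 {m : ℕ} (H : SimpleGraph (Fin m)) (f : Fin m → ℕ) : Prop :=
  ∀ V' : Finset (Fin m), V'.Nonempty →
    (∑ i ∈ V', f i) + 1 ≤ (Gam H (V' : Set (Fin m))).ncard

/-- `F_H`: functions satisfying conditions (i) and (ii) for `D(H)`. -/
def FSet {m : ℕ} (H : SimpleGraph (Fin m)) : Set (Fin m → ℕ) :=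
  {f | (∑ i, f i) = m - 1 ∧ cond2 H f}

/-- `η_H(f)`: indices `j` admitting `j' < j` such that the transfer of one unit
from `j` to `j'` again satisfies condition (ii). -/
def eta {m : ℕ} (H : SimpleGraph (Fin m)) (f : Fin m → ℕ) : Set (Fin m) :=
  {j | ∃ j', j' < j ∧ ∃ g : Fin m → ℕ,
    g j' = f j' + 1 ∧ (g j : ℤ) = (f j : ℤ) - 1 ∧
    (∀ i, i ≠ j' → i ≠ j → g i = f i) ∧ cond2 H g}

/-- `F_H(k) = {f ∈ F_H : |η_H(f)| = k}`. -/
def FSetK {m : ℕ} (H : SimpleGraph (Fin m)) (k : ℕ) : Set (Fin m → ℕ) :=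
  {f | f ∈ FSet H ∧ (eta H f).ncard = k}

/-- All edges between `{1,…,m1}` and `{m1+1,…,m}` in `Fin m`. -/
def crossGraph (m m1 : ℕ) : SimpleGraph (Fin m) :=
  SimpleGraph.fromRel fun a b => (a : ℕ) < m1 ∧ m1 ≤ (b : ℕ)

/-- The complete graph on the first `m1` vertices of `Fin m`. -/
def leftComplete (m m1 : ℕ) : SimpleGraph (Fin m) :=
  SimpleGraph.fromRel fun a b => (a : ℕ) < m1 ∧ (b : ℕ) < m1

/-- The complete graph on the last `m − m1` vertices of `Fin m`. -/
def rightComplete (m m1 : ℕ) : SimpleGraph (Fin m) :=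
  SimpleGraph.fromRel fun a b => m1 ≤ (a : ℕ) ∧ m1 ≤ (b : ℕ)

/-- The tilde construction: a bipartite graph `H` on `V ⊕ W` together with two
new vertices `u = inr 0` and `w = inr 1`, where `u` is joined to all of `V` and
`w` is joined to all of `W` and to `u`. -/
def tilde {V W : Type*} (H : SimpleGraph (V ⊕ W)) : SimpleGraph ((V ⊕ W) ⊕ Fin 2) :=
  SimpleGraph.fromRel fun a b =>
    (∃ x y, a = Sum.inl x ∧ b = Sum.inl y ∧ H.Adj x y) ∨
    (∃ i : V, a = Sum.inl (Sum.inl i) ∧ b = Sum.inr 0) ∨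
    (∃ j : W, a = Sum.inl (Sum.inr j) ∧ b = Sum.inr 1) ∨
    (a = Sum.inr 0 ∧ b = Sum.inr 1)



lemma DG_adj' {V : Type*} (G : SimpleGraph V) (a b : V ⊕ V) :
    (DG G).Adj a b ↔ a ≠ b ∧
      ((∃ i j, a = Sum.inl i ∧ b = Sum.inr j ∧ (i = j ∨ G.Adj i j)) ∨
       (∃ i j, a = Sum.inr j ∧ b = Sum.inl i ∧ (i = j ∨ G.Adj i j))) := by
  rw [DG, SimpleGraph.fromRel_adj]
  rcases a with i | i <;> rcases b with j | j <;> simp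

lemma tilde_adj' {V W : Type*} (H : SimpleGraph (V ⊕ W)) (a b : (V ⊕ W) ⊕ Fin 2) :
    (tilde H).Adj a b ↔ a ≠ b ∧
      (((∃ x y, a = Sum.inl x ∧ b = Sum.inl y ∧ H.Adj x y) ∨
        (∃ i : V, a = Sum.inl (Sum.inl i) ∧ b = Sum.inr 0) ∨
        (∃ j : W, a = Sum.inl (Sum.inr j) ∧ b = Sum.inr 1) ∨
        (a = Sum.inr 0 ∧ b = Sum.inr 1)) ∨
       ((∃ x y, b = Sum.inl x ∧ a = Sum.inl y ∧ H.Adj x y) ∨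
        (∃ i : V, b = Sum.inl (Sum.inl i) ∧ a = Sum.inr 0) ∨
        (∃ j : W, b = Sum.inl (Sum.inr j) ∧ a = Sum.inr 1) ∨
        (b = Sum.inr 0 ∧ a = Sum.inr 1))) := by
  rw [tilde, SimpleGraph.fromRel_adj]

def tildeEquiv (n : ℕ) : ((Fin n ⊕ Fin 1) ⊕ (Fin n ⊕ Fin 1)) ≃ ((Fin n ⊕ Fin n) ⊕ Fin 2) where
  toFun x := match x with
    | Sum.inl (Sum.inl i) => Sum.inl (Sum.inl i)
    | Sum.inl (Sum.inr _) => Sum.inr 1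
    | Sum.inr (Sum.inl j) => Sum.inl (Sum.inr j)
    | Sum.inr (Sum.inr _) => Sum.inr 0
  invFun x := match x with
    | Sum.inl (Sum.inl i) => Sum.inl (Sum.inl i)
    | Sum.inl (Sum.inr j) => Sum.inr (Sum.inl j)
    | Sum.inr k => if k = 0 then Sum.inr (Sum.inr 0) else Sum.inl (Sum.inr 0)
  left_inv := by
    rintro ((i | x) | (j | x))
    · rfl
    · simp [Subsingleton.elim x 0]
    · rfl
    · simp [Subsingleton.elim x 0]
  right_inv := by
    rintro ((i | j) | k)
    · rfl
    · rfl
    · fin_cases k <;> simp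

/-- For every graph `G` on `[n]`, the bipartite graph `D(G + K₁)` is
isomorphic to the graph obtained from `D(G)` by the tilde construction with respect to
the bipartition `[n] ⊔ [n̄]`. -/
theorem DG_join_K1_iso_tilde (n : ℕ) (G : SimpleGraph (Fin n)) :
    Nonempty (DG (sumJoin G (⊤ : SimpleGraph (Fin 1))) ≃g tilde (DG G)) := by
  refine ⟨⟨tildeEquiv n, ?_⟩⟩
  rintro ((i | x) | (j | x)) ((i' | x') | (j' | x')) <;>
    simp only [tildeEquiv, Equiv.coe_fn_mk, DG_adj', tilde_adj', sumJoin] <;>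
    aesop


end PQPaper
end

section
/- Let G_1 be a graph on vertex set {1,…,m_1} and G_2 a graph on vertex set {m_1+1,…,m} where m = m_1 + m_2, and let G = G_1 + G_2 be their join. Let K_{m_1} denote the complete graph on {1,…,m_1} and K_{m_2} the complete graph on {m_1+1,…,m}. Then F_G = F_{G_1 + K_{m_2}} ∩ F_{K_{m_1} + G_2}, i.e., a function f : [m] → ℤ_{≥0} satisfies conditions (i) and (ii) for D(G) if and only if it satisfies them for both D(G_1 + K_{m_2}) and D(K_{m_1} + G_2). -/
open SimpleGraph Polynomial

namespace PQPaper

lemma DG_adj_inl_inr {V : Type*} (H : SimpleGraph V) (i j : V) :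
    (DG H).Adj (Sum.inl i) (Sum.inr j) ↔ i = j ∨ H.Adj i j := by
  simp [DG, SimpleGraph.fromRel_adj]

lemma mem_Gam {m : ℕ} (H : SimpleGraph (Fin m)) (V' : Set (Fin m)) (j : Fin m) :
    j ∈ Gam H V' ↔ ∃ i ∈ V', i = j ∨ H.Adj i j := by
  simp [Gam, DG_adj_inl_inr]

lemma rightComplete_adj {m m1 : ℕ} {i j : Fin m} :
    (rightComplete m m1).Adj i j ↔ i ≠ j ∧ m1 ≤ (i : ℕ) ∧ m1 ≤ (j : ℕ) := by
  simp only [rightComplete, SimpleGraph.fromRel_adj]; tauto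

lemma leftComplete_adj {m m1 : ℕ} {i j : Fin m} :
    (leftComplete m m1).Adj i j ↔ i ≠ j ∧ (i : ℕ) < m1 ∧ (j : ℕ) < m1 := by
  simp only [leftComplete, SimpleGraph.fromRel_adj]; tauto

lemma crossGraph_adj {m m1 : ℕ} {i j : Fin m} :
    (crossGraph m m1).Adj i j ↔ i ≠ j ∧
      (((i : ℕ) < m1 ∧ m1 ≤ (j : ℕ)) ∨ ((j : ℕ) < m1 ∧ m1 ≤ (i : ℕ))) := by
  simp only [crossGraph, SimpleGraph.fromRel_adj]

lemma Gam_eq_of {m : ℕ} {H K : SimpleGraph (Fin m)} {V' : Set (Fin m)}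
    (h : ∀ i ∈ V', ∀ j, H.Adj i j ↔ K.Adj i j) : Gam H V' = Gam K V' := by
  ext j
  simp only [mem_Gam]
  constructor <;> rintro ⟨i, hi, hij⟩ <;> refine ⟨i, hi, ?_⟩
  · rcases hij with h' | h'
    · exact Or.inl h'
    · exact Or.inr ((h i hi j).mp h')
  · rcases hij with h' | h'
    · exact Or.inl h'
    · exact Or.inr ((h i hi j).mpr h')

lemma Gam_univ {m : ℕ} {H : SimpleGraph (Fin m)} {V' : Set (Fin m)}
    (h : ∀ j : Fin m, ∃ i ∈ V', i = j ∨ H.Adj i j) : Gam H V' = Set.univ := by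
  ext j
  simp only [Set.mem_univ, iff_true, mem_Gam]
  exact h j

lemma sum_bound {m : ℕ} (f : Fin m → ℕ) (hf : (∑ i, f i) = m - 1)
    (V' : Finset (Fin m)) (hne : V'.Nonempty) :
    (∑ i ∈ V', f i) + 1 ≤ (Set.univ : Set (Fin m)).ncard := by
  obtain ⟨x, -⟩ := hne
  have hm : 0 < m := x.pos
  have h1 : (Set.univ : Set (Fin m)).ncard = m := by
    rw [Set.ncard_univ]; simp
  have h2 : ∑ i ∈ V', f i ≤ ∑ i, f i :=
    Finset.sum_le_sum_of_subset (Finset.subset_univ _)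
  omega

/-- For `G₁` supported on `{1,…,m₁}` and `G₂` supported on
`{m₁+1,…,m}` with `m = m₁ + m₂`, one has `F_{G₁+G₂} = F_{G₁+K_{m₂}} ∩ F_{K_{m₁}+G₂}`. -/
theorem FSet_join_inter (m1 m2 m : ℕ) (hm : m = m1 + m2)
    (G1 G2 : SimpleGraph (Fin m))
    (hG1 : ∀ i j, G1.Adj i j → (i : ℕ) < m1 ∧ (j : ℕ) < m1)
    (hG2 : ∀ i j, G2.Adj i j → m1 ≤ (i : ℕ) ∧ m1 ≤ (j : ℕ)) :
    FSet (G1 ⊔ G2 ⊔ crossGraph m m1) =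
      FSet (G1 ⊔ rightComplete m m1 ⊔ crossGraph m m1) ∩
        FSet (leftComplete m m1 ⊔ G2 ⊔ crossGraph m m1) := by
  ext f
  simp only [Set.mem_inter_iff, FSet, Set.mem_setOf_eq]
  have hne : ∀ {i j : Fin m}, (i : ℕ) < m1 → m1 ≤ (j : ℕ) → i ≠ j := by
    intro i j h1 h2 he
    subst he; omega
  -- Gam equality for V' contained in the left part
  have gamL : ∀ V' : Set (Fin m), (∀ i ∈ V', (i : ℕ) < m1) →
      Gam (G1 ⊔ G2 ⊔ crossGraph m m1) V' =
        Gam (G1 ⊔ rightComplete m m1 ⊔ crossGraph m m1) V' := by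
    intro V' hV
    refine Gam_eq_of fun i hi j => ?_
    have hi' := hV i hi
    have h2 : ¬ G2.Adj i j := fun h => by have := (hG2 i j h).1; omega
    have h3 : ¬ (rightComplete m m1).Adj i j := fun h => by
      have := (rightComplete_adj.mp h).2.1; omega
    simp only [SimpleGraph.sup_adj]
    tauto
  -- Gam equality for V' contained in the right part
  have gamR : ∀ V' : Set (Fin m), (∀ i ∈ V', m1 ≤ (i : ℕ)) →
      Gam (G1 ⊔ G2 ⊔ crossGraph m m1) V' =
        Gam (leftComplete m m1 ⊔ G2 ⊔ crossGraph m m1) V' := by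
    intro V' hV
    refine Gam_eq_of fun i hi j => ?_
    have hi' := hV i hi
    have h2 : ¬ G1.Adj i j := fun h => by have := (hG1 i j h).1; omega
    have h3 : ¬ (leftComplete m m1).Adj i j := fun h => by
      have := (leftComplete_adj.mp h).2.1; omega
    simp only [SimpleGraph.sup_adj]
    tauto
  constructor
  · rintro ⟨h1, h2⟩
    refine ⟨⟨h1, fun V' hV' => ?_⟩, h1, fun V' hV' => ?_⟩
    · -- G1 + K_{m2}
      by_cases hB : ∃ b ∈ V', m1 ≤ (b : ℕ)
      · obtain ⟨b, hb, hbm⟩ := hB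
        have : Gam (G1 ⊔ rightComplete m m1 ⊔ crossGraph m m1) (V' : Set (Fin m)) =
            Set.univ := by
          refine Gam_univ fun j => ⟨b, by simpa using hb, ?_⟩
          rcases lt_or_ge (j : ℕ) m1 with hj | hj
          · exact Or.inr (Or.inr (crossGraph_adj.mpr
              ⟨(hne hj hbm).symm, Or.inr ⟨hj, hbm⟩⟩))
          · by_cases hbj : b = j
            · exact Or.inl hbj
            · exact Or.inr (Or.inl (Or.inr (rightComplete_adj.mpr ⟨hbj, hbm, hj⟩)))
        rw [this]
        exact sum_bound f h1 V' hV'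
      · push_neg at hB
        rw [← gamL _ (by simpa using hB)]
        exact h2 V' hV'
    · -- K_{m1} + G2
      by_cases hA : ∃ a ∈ V', (a : ℕ) < m1
      · obtain ⟨a, ha, ham⟩ := hA
        have : Gam (leftComplete m m1 ⊔ G2 ⊔ crossGraph m m1) (V' : Set (Fin m)) =
            Set.univ := by
          refine Gam_univ fun j => ⟨a, by simpa using ha, ?_⟩
          rcases lt_or_ge (j : ℕ) m1 with hj | hj
          · by_cases haj : a = j
            · exact Or.inl haj
            · exact Or.inr (Or.inl (Or.inl (leftComplete_adj.mpr ⟨haj, ham, hj⟩)))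
          · exact Or.inr (Or.inr (crossGraph_adj.mpr
              ⟨hne ham hj, Or.inl ⟨ham, hj⟩⟩))
        rw [this]
        exact sum_bound f h1 V' hV'
      · push_neg at hA
        rw [← gamR _ (by simpa using hA)]
        exact h2 V' hV'
  · rintro ⟨⟨h1, h2⟩, -, h3⟩
    refine ⟨h1, fun V' hV' => ?_⟩
    by_cases hB : ∃ b ∈ V', m1 ≤ (b : ℕ)
    · by_cases hA : ∃ a ∈ V', (a : ℕ) < m1
      · obtain ⟨a, ha, ham⟩ := hA
        obtain ⟨b, hb, hbm⟩ := hB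
        have : Gam (G1 ⊔ G2 ⊔ crossGraph m m1) (V' : Set (Fin m)) = Set.univ := by
          refine Gam_univ fun j => ?_
          rcases lt_or_ge (j : ℕ) m1 with hj | hj
          · exact ⟨b, by simpa using hb, Or.inr (Or.inr (crossGraph_adj.mpr
              ⟨(hne hj hbm).symm, Or.inr ⟨hj, hbm⟩⟩))⟩
          · exact ⟨a, by simpa using ha, Or.inr (Or.inr (crossGraph_adj.mpr
              ⟨hne ham hj, Or.inl ⟨ham, hj⟩⟩))⟩
        rw [this]
        exact sum_bound f h1 V' hV'
      · push_neg at hA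
        rw [gamR _ (by simpa using hA)]
        exact h3 V' hV'
    · push_neg at hB
      rw [gamL _ (by simpa using hB)]
      exact h2 V' hV'


end PQPaper
end

section
/- For every integer m ≥ 2, the polynomial identity f_{2,m}(x) = (x+1)^{m+1} + m((m+1)x + 2) x (x+1)^{m−2} holds; equivalently, f_{2,m}(x) = Σ_{k=0}^{m} C(m, k) (x + 1 + k^2 + k) x^k. -/
open SimpleGraph Polynomial

namespace PQPaper

noncomputable def canon (m n : ℕ) : ℤ :=
  (if n = 0 then 0 else (m.choose (n-1) : ℤ)) + (1 + (n:ℤ) + (n:ℤ)^2) * (m.choose n : ℤ)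

lemma cval (m j : ℕ) :
    (∑ a ∈ Finset.range (j + 2),
      ((2 - 1 : ℕ).choose (j + 1 - a) : ℤ) * (m.choose a : ℤ) *
        ∑ b ∈ Finset.Icc a (j + 1), ((2 + a - 1).choose b : ℤ) * ((m - a).choose (j + 1 - b) : ℤ))
    = (m.choose j : ℤ) + (1 + ((j:ℤ)+1) + ((j:ℤ)+1) ^ 2) * (m.choose (j+1) : ℤ) := by
  rw [Finset.sum_range_succ, Finset.sum_range_succ]
  rw [Finset.sum_eq_zero (fun a ha => by
    rw [Finset.mem_range] at ha
    rw [Nat.choose_eq_zero_of_lt (by omega : (2-1:ℕ) < j + 1 - a)]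
    simp)]
  have h1 : (2 + j - 1 : ℕ) = j + 1 := by omega
  have h2 : (2 + (j+1) - 1 : ℕ) = j + 2 := by omega
  rw [h1, h2]
  rw [Finset.sum_Icc_succ_top (by omega), Finset.Icc_self, Finset.sum_singleton,
    Finset.Icc_self, Finset.sum_singleton]
  simp [Nat.choose_succ_self_right]
  have key : (m.choose (j+1) : ℤ) * (j+1) = (m.choose j : ℤ) * ((m - j : ℕ) : ℤ) := by
    exact_mod_cast congrArg (Nat.cast : ℕ → ℤ) (Nat.choose_succ_right_eq m j)
  linear_combination (-((j:ℤ) + 1)) * key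

lemma L1 (m n : ℕ) : (fPoly 2 m).coeff n = canon m n := by
  rw [fPoly, Polynomial.finset_sum_coeff]
  simp only [Polynomial.coeff_C_mul, Polynomial.coeff_X_pow, mul_ite, mul_one, mul_zero]
  rw [Finset.sum_ite_eq (Finset.range (2+m)) n]
  by_cases hn : n ∈ Finset.range (2+m)
  · rw [if_pos hn]
    rcases n with _ | j
    · simp [canon]
    · rw [cval]
      simp [canon]
  · rw [if_neg hn, canon]
    rw [Finset.mem_range] at hn
    rw [Nat.choose_eq_zero_of_lt (by omega), Nat.choose_eq_zero_of_lt (by omega)]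
    split_ifs <;> simp

lemma L2 (m n : ℕ) : (∑ k ∈ Finset.range (m + 1),
          Polynomial.C (m.choose k : ℤ) *
            (Polynomial.X + Polynomial.C (1 + (k : ℤ) ^ 2 + (k : ℤ))) * Polynomial.X ^ k).coeff n
    = canon m n := by
  rw [Polynomial.finset_sum_coeff]
  have expand : ∀ k, (Polynomial.C (m.choose k : ℤ) *
            (Polynomial.X + Polynomial.C (1 + (k : ℤ) ^ 2 + (k : ℤ))) * Polynomial.X ^ k)
      = Polynomial.C (m.choose k : ℤ) * Polynomial.X ^ (k+1)
        + Polynomial.C ((m.choose k : ℤ) * (1 + (k : ℤ) ^ 2 + (k : ℤ))) * Polynomial.X ^ k := by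
    intro k; rw [Polynomial.C_mul]; ring
  simp only [expand, Polynomial.coeff_add, Polynomial.coeff_C_mul, Polynomial.coeff_X_pow,
    Finset.sum_add_distrib, mul_ite, mul_one, mul_zero]
  rw [Finset.sum_ite_eq (Finset.range (m+1)) n]
  rcases n with _ | n'
  · simp [canon]
  · have h1 : ∀ k, (n' + 1 = k + 1) = (n' = k) := by intro k; simp
    simp only [h1]
    rw [Finset.sum_ite_eq (Finset.range (m+1)) n']
    rw [canon]
    simp only [Nat.succ_ne_zero, if_neg, Nat.add_sub_cancel]
    by_cases h2 : n' ∈ Finset.range (m+1)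
    · rw [if_pos h2]
      by_cases h3 : n'+1 ∈ Finset.range (m+1)
      · rw [if_pos h3]; push_cast; ring
      · rw [if_neg h3, Finset.mem_range] at *
        rw [Nat.choose_eq_zero_of_lt (by omega : m < n'+1)]
        push_cast; ring
    · rw [if_neg h2]
      rw [Finset.mem_range] at h2
      rw [if_neg (by rw [Finset.mem_range]; omega)]
      rw [Nat.choose_eq_zero_of_lt (by omega), Nat.choose_eq_zero_of_lt (by omega)]
      push_cast; ring

lemma L3 (m n M : ℕ) (hM : m = M + 2) :
    ((Polynomial.X + 1) ^ (m + 1) +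
          Polynomial.C (m : ℤ) * (Polynomial.C ((m : ℤ) + 1) * Polynomial.X + 2) *
            Polynomial.X * (Polynomial.X + 1) ^ (m - 2)).coeff n = canon m n := by
  have h2 : m - 2 = M := by omega
  have expand : Polynomial.C (m : ℤ) * (Polynomial.C ((m : ℤ) + 1) * Polynomial.X + 2) *
            Polynomial.X * (Polynomial.X + 1) ^ (m - 2)
      = Polynomial.C ((m:ℤ) * ((m:ℤ)+1)) * ((Polynomial.X + 1) ^ M * Polynomial.X ^ 2)
        + Polynomial.C (2 * (m:ℤ)) * ((Polynomial.X + 1) ^ M * Polynomial.X ^ 1) := by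
    rw [h2]; simp only [Polynomial.C_mul, map_ofNat]; ring
  rw [expand, Polynomial.coeff_add, Polynomial.coeff_add, Polynomial.coeff_C_mul,
    Polynomial.coeff_C_mul, Polynomial.coeff_mul_X_pow', Polynomial.coeff_mul_X_pow']
  simp only [Polynomial.coeff_X_add_one_pow]
  subst hM
  rcases n with _ | _ | n'
  · norm_num [canon]
  · norm_num [canon]
    push_cast; ring
  · rw [canon]
    norm_num
    have hP : ((M+3).choose (n'+2) : ℤ) = ((M+2).choose (n'+1) : ℤ) + ((M+2).choose (n'+2) : ℤ) := by
      exact_mod_cast congrArg (Nat.cast : ℕ → ℤ) (Nat.choose_succ_succ (M+2) (n'+1))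
    have hPas2 : ((M+1).choose (n'+1) : ℤ) = (M.choose n' : ℤ) + (M.choose (n'+1) : ℤ) := by
      exact_mod_cast congrArg (Nat.cast : ℕ → ℤ) (Nat.choose_succ_succ M n')
    have R1 : ((M:ℤ)+2) * ((M+1).choose (n'+1) : ℤ) = ((M+2).choose (n'+2) : ℤ) * ((n':ℤ)+2) := by
      exact_mod_cast congrArg (Nat.cast : ℕ → ℤ) (Nat.add_one_mul_choose_eq (M+1) (n'+1))
    have R2 : ((M:ℤ)+1) * (M.choose n' : ℤ) = ((M+1).choose (n'+1) : ℤ) * ((n':ℤ)+1) := by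
      exact_mod_cast congrArg (Nat.cast : ℕ → ℤ) (Nat.add_one_mul_choose_eq M n')
    push_cast
    linear_combination hP + ((n':ℤ)+3) * R1 + ((M:ℤ)+2) * R2 - 2*((M:ℤ)+2) * hPas2


/-- For every integer `m ≥ 2`,
`f_{2,m}(x) = (x+1)^{m+1} + m((m+1)x + 2) x (x+1)^{m−2}`; equivalently,
`f_{2,m}(x) = Σ_{k=0}^{m} C(m,k) (x + 1 + k² + k) x^k`. -/
theorem fPoly_two (m : ℕ) (hm : 2 ≤ m) :
    fPoly 2 m =
        (Polynomial.X + 1) ^ (m + 1) +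
          Polynomial.C (m : ℤ) * (Polynomial.C ((m : ℤ) + 1) * Polynomial.X + 2) *
            Polynomial.X * (Polynomial.X + 1) ^ (m - 2) ∧
      fPoly 2 m =
        ∑ k ∈ Finset.range (m + 1),
          Polynomial.C (m.choose k : ℤ) *
            (Polynomial.X + Polynomial.C (1 + (k : ℤ) ^ 2 + (k : ℤ))) * Polynomial.X ^ k := by
  obtain ⟨M, hM⟩ : ∃ M, m = M + 2 := ⟨m - 2, by omega⟩
  constructor
  · ext n
    rw [L1, L3 m n M hM]
  · ext n
    rw [L1, L2]

end PQPaper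
end
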